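/- (Equivalence Dirichlet → Neumann.) Assume α₂ > α₃ and A > B. Let μ₁ > z₀ be the unique solution of the reduced Dirichlet system with data A, and let μ₂ ≥ 0 satisfy erf(μ₂·√(α₁/α₂)) = H(μ₁). Assume moreover k₃·(A−B)/(√α₃·erf(μ₂·√(α₁/α₃))) > k₂·(B−C)/(√α₂·erf(z₀·√(α₁/α₂))), and define q₀ := (k₃/√(π·α₃))·(A−B)/erf(μ₂·√(α₁/α₃)). Then q₀ > q₂ and Q(μ₁) = P(μ₂), where P is the Neumann function built from this q₀; consequently μ₁ coincides with the unique solution λ₁ > z₀ of the reduced Neumann system with data q₀, and μ₂ = λ₂. -/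

import Mathlib

open MeasureTheory Set



noncomputable section

/-- The error function `erf x = (2/√π) ∫₀ˣ exp(−s²) ds`. -/
def erf (x : ℝ) : ℝ := (2 / Real.sqrt Real.pi) * ∫ s in (0:ℝ)..x, Real.exp (-(s^2))

/-- The complementary error function. -/
def erfc (x : ℝ) : ℝ := 1 - erf x

lemma gauss_integrable : MeasureTheory.Integrable (fun s : ℝ => Real.exp (-(s^2))) := by
  have := integrable_exp_neg_mul_sq (one_pos (α := ℝ))
  simpa using this

lemma gauss_tail_shift (z : ℝ) :
    ∫ s in Ioi z, Real.exp (-(s^2)) = ∫ t in Ioi (0:ℝ), Real.exp (-((t+z)^2)) := by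
  have h := (measurePreserving_add_right (volume : Measure ℝ) z).setIntegral_preimage_emb
    (measurableEmbedding_addRight z) (fun s => Real.exp (-(s^2))) (Ioi z)
  have hpre : (· + z) ⁻¹' (Ioi z) = Ioi (0:ℝ) := by
    ext t; simp [lt_add_iff_pos_left]
  rw [hpre] at h
  exact h.symm

lemma setIntegral_lt_setIntegral {f g : ℝ → ℝ}
    (hf : IntegrableOn f (Ioi (0:ℝ))) (hg : IntegrableOn g (Ioi (0:ℝ)))
    (h : ∀ t ∈ Ioi (0:ℝ), f t < g t) :
    ∫ t in Ioi (0:ℝ), f t < ∫ t in Ioi (0:ℝ), g t := by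
  have h0 : 0 < ∫ t in Ioi (0:ℝ), (g t - f t) := by
    rw [setIntegral_pos_iff_support_of_nonneg_ae]
    · refine lt_of_lt_of_le ?_ (measure_mono (?_ : Ioi (0:ℝ) ⊆ _))
      · rw [Real.volume_Ioi]; exact ENNReal.zero_lt_top
      · intro t ht
        exact ⟨fun hc => (sub_ne_zero.2 (h t ht).ne') hc, ht⟩
    · exact (ae_restrict_iff' measurableSet_Ioi).2
        (Filter.Eventually.of_forall fun t ht => sub_nonneg.2 (h t ht).le)
    · exact hg.sub hf
  have := integral_sub hg hf
  rw [this] at h0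
  linarith

lemma gauss_tail_pos (z : ℝ) : 0 < ∫ s in Ioi z, Real.exp (-(s^2)) := by
  rw [setIntegral_pos_iff_support_of_nonneg_ae]
  · refine lt_of_lt_of_le ?_ (measure_mono (?_ : Ioi z ⊆ _))
    · rw [Real.volume_Ioi]; exact ENNReal.zero_lt_top
    · intro t ht; exact ⟨(Real.exp_pos _).ne', ht⟩
  · exact (ae_restrict_iff' measurableSet_Ioi).2
      (Filter.Eventually.of_forall fun t _ => (Real.exp_pos _).le)
  · exact gauss_integrable.integrableOn

lemma gauss_tail_zero : ∫ s in Ioi (0:ℝ), Real.exp (-(s^2)) = Real.sqrt Real.pi / 2 := by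
  have := integral_gaussian_Ioi 1
  simpa using this

lemma erf_strictMono : StrictMono erf := by
  intro x y hxy
  unfold erf
  have h2 : (0:ℝ) < 2 / Real.sqrt Real.pi := by
    have := Real.sqrt_pos.2 Real.pi_pos
    positivity
  apply mul_lt_mul_of_pos_left _ h2
  have hsplit : (∫ s in (0:ℝ)..y, Real.exp (-(s^2)))
      = (∫ s in (0:ℝ)..x, Real.exp (-(s^2))) + ∫ s in x..y, Real.exp (-(s^2)) :=
    (intervalIntegral.integral_add_adjacent_intervals
      gauss_integrable.intervalIntegrable gauss_integrable.intervalIntegrable).symm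
  have hpos : 0 < ∫ s in x..y, Real.exp (-(s^2)) :=
    intervalIntegral.intervalIntegral_pos_of_pos
      gauss_integrable.intervalIntegrable (fun s => Real.exp_pos _) hxy
  linarith

lemma erf_zero : erf 0 = 0 := by simp [erf]

lemma erf_pos {z : ℝ} (hz : 0 < z) : 0 < erf z := by
  have := erf_strictMono hz
  rwa [erf_zero] at this

lemma erf_split {z : ℝ} (hz : 0 < z) :
    Real.sqrt Real.pi / 2 = (∫ s in (0:ℝ)..z, Real.exp (-(s^2))) + ∫ s in Ioi z, Real.exp (-(s^2)) := by
  rw [← gauss_tail_zero, intervalIntegral.integral_of_le hz.le]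
  rw [← setIntegral_union (Ioc_disjoint_Ioi le_rfl) measurableSet_Ioi
    gauss_integrable.integrableOn gauss_integrable.integrableOn,
    Ioc_union_Ioi_eq_Ioi hz.le]

lemma erfc_eq_tail {z : ℝ} (hz : 0 < z) :
    erfc z = (2 / Real.sqrt Real.pi) * ∫ s in Ioi z, Real.exp (-(s^2)) := by
  have hπ : Real.sqrt Real.pi ≠ 0 := (Real.sqrt_pos.2 Real.pi_pos).ne'
  have h := erf_split hz
  unfold erfc erf
  have h2 : (∫ s in Ioi z, Real.exp (-(s^2))) = Real.sqrt Real.pi / 2 - ∫ s in (0:ℝ)..z, Real.exp (-(s^2)) := by linarith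
  rw [h2]
  field_simp

lemma erfc_pos {z : ℝ} (hz : 0 < z) : 0 < erfc z := by
  rw [erfc_eq_tail hz]
  have := gauss_tail_pos z
  have hπ : (0:ℝ) < Real.sqrt Real.pi := Real.sqrt_pos.2 Real.pi_pos
  positivity

lemma mills_mono {x y : ℝ} (hx : 0 < x) (hxy : x < y) :
    Real.exp (-(x^2)) / erfc x < Real.exp (-(y^2)) / erfc y := by
  have hy : 0 < y := hx.trans hxy
  have hex : 0 < erfc x := erfc_pos hx
  have hey : 0 < erfc y := erfc_pos hy
  rw [div_lt_div_iff₀ hex hey]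
  rw [erfc_eq_tail hx, erfc_eq_tail hy]
  have hπ : (0:ℝ) < 2 / Real.sqrt Real.pi := by
    have := Real.sqrt_pos.2 Real.pi_pos; positivity
  have key : Real.exp (-(x^2)) * ∫ s in Ioi y, Real.exp (-(s^2))
      < Real.exp (-(y^2)) * ∫ s in Ioi x, Real.exp (-(s^2)) := by
    rw [gauss_tail_shift x, gauss_tail_shift y, ← MeasureTheory.integral_const_mul, ← MeasureTheory.integral_const_mul]
    have hix : IntegrableOn (fun t => Real.exp (-(x^2)) * Real.exp (-((t+y)^2))) (Ioi (0:ℝ)) :=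
      ((gauss_integrable.comp_add_right y).const_mul _).integrableOn
    have hiy : IntegrableOn (fun t => Real.exp (-(y^2)) * Real.exp (-((t+x)^2))) (Ioi (0:ℝ)) :=
      ((gauss_integrable.comp_add_right x).const_mul _).integrableOn
    refine setIntegral_lt_setIntegral hix hiy fun t ht => ?_
    rw [← Real.exp_add, ← Real.exp_add]
    apply Real.exp_lt_exp.2
    have ht' : 0 < t := ht
    nlinarith
  calc Real.exp (-(x^2)) * (2 / Real.sqrt Real.pi * ∫ s in Ioi y, Real.exp (-(s^2)))
      = (2 / Real.sqrt Real.pi) * (Real.exp (-(x^2)) * ∫ s in Ioi y, Real.exp (-(s^2))) := by ring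
    _ < (2 / Real.sqrt Real.pi) * (Real.exp (-(y^2)) * ∫ s in Ioi x, Real.exp (-(s^2))) :=
        mul_lt_mul_of_pos_left key hπ
    _ = Real.exp (-(y^2)) * (2 / Real.sqrt Real.pi * ∫ s in Ioi x, Real.exp (-(s^2))) := by ring
/-- Physical data of the three-phase Stefan problem: positive thermal conductivities,
specific heats, mass density, latent heats, and temperatures `B > C > D`. -/
structure Params where
  k₁ : ℝ
  k₂ : ℝ
  k₃ : ℝ
  c₁ : ℝ
  c₂ : ℝ
  c₃ : ℝ
  ρ : ℝ
  ℓ₁ : ℝ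
  ℓ₂ : ℝ
  B : ℝ
  C : ℝ
  D : ℝ
  hk₁ : 0 < k₁
  hk₂ : 0 < k₂
  hk₃ : 0 < k₃
  hc₁ : 0 < c₁
  hc₂ : 0 < c₂
  hc₃ : 0 < c₃
  hρ : 0 < ρ
  hℓ₁ : 0 < ℓ₁
  hℓ₂ : 0 < ℓ₂
  hBC : C < B
  hCD : D < C

namespace Params

/-- Thermal diffusivity of phase 1. -/
def α₁ (p : Params) : ℝ := p.k₁ / (p.ρ * p.c₁)

/-- Thermal diffusivity of phase 2. -/
def α₂ (p : Params) : ℝ := p.k₂ / (p.ρ * p.c₂)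

/-- Thermal diffusivity of phase 3. -/
def α₃ (p : Params) : ℝ := p.k₃ / (p.ρ * p.c₃)

/-- Stefan number `Ste₁ = c₁(C−D)/ℓ₁`. -/
def Ste₁ (p : Params) : ℝ := p.c₁ * (p.C - p.D) / p.ℓ₁

/-- Stefan number `Ste₂ = c₂(B−C)/ℓ₂`. -/
def Ste₂ (p : Params) : ℝ := p.c₂ * (p.B - p.C) / p.ℓ₂

/-- `φ(z) = z + (Ste₁/√π) exp(−z²)/erfc(z)`. -/
def φ (p : Params) (z : ℝ) : ℝ :=
  z + (p.Ste₁ / Real.sqrt Real.pi) * Real.exp (-(z^2)) / erfc z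

/-- `H(z) = erf(z√(α₁/α₂)) − (Ste₂/√π)(ℓ₂/ℓ₁)√(k₂c₁/(k₁c₂)) exp(−z²α₁/α₂)/φ(z)`. -/
def H (p : Params) (z : ℝ) : ℝ :=
  erf (z * Real.sqrt (p.α₁ / p.α₂)) -
    (p.Ste₂ / Real.sqrt Real.pi) * (p.ℓ₂ / p.ℓ₁) *
      Real.sqrt (p.k₂ * p.c₁ / (p.k₁ * p.c₂)) *
      (Real.exp (-(z^2) * (p.α₁ / p.α₂)) / p.φ z)

/-- `Q(z) = (ℓ₁/ℓ₂) φ(z) exp(z² α₁/α₂)`. -/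
def Q (p : Params) (z : ℝ) : ℝ :=
  (p.ℓ₁ / p.ℓ₂) * p.φ z * Real.exp (z^2 * (p.α₁ / p.α₂))

/-- The function `T` arising from the Robin (convective) boundary condition with
heat-transfer coefficient `h₀` and bulk temperature `Ainf`. -/
def T (p : Params) (h₀ Ainf : ℝ) (z : ℝ) : ℝ :=
  (p.Ste₂ / (Real.sqrt Real.pi * p.c₂)) * ((Ainf - p.B) / (p.B - p.C)) *
    Real.sqrt (p.k₃ * p.c₁ * p.c₃ / p.k₁) *
    (Real.exp (-(z^2) * p.α₁ * (1 / p.α₃ - 1 / p.α₂)) /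
      (p.k₃ / (h₀ * Real.sqrt (Real.pi * p.α₃)) + erf (z * Real.sqrt (p.α₁ / p.α₃)))) -
  z * Real.exp (z^2 * (p.α₁ / p.α₂))

/-- The function `V` arising from the Dirichlet boundary condition with temperature `A`. -/
def V (p : Params) (A : ℝ) (z : ℝ) : ℝ :=
  ((A - p.B) / p.ℓ₂) * Real.sqrt (p.c₁ * p.c₃ * p.k₃ / (Real.pi * p.k₁)) *
    (Real.exp (-(z^2) * (p.α₁ / p.α₃ - p.α₁ / p.α₂)) / erf (z * Real.sqrt (p.α₁ / p.α₃))) -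
  z * Real.exp (z^2 * (p.α₁ / p.α₂))

/-- The function `P` arising from the Neumann boundary condition with flux coefficient `q₀`. -/
def P (p : Params) (q₀ : ℝ) (z : ℝ) : ℝ :=
  Real.exp (z^2 * (p.α₁ / p.α₂)) *
    (-z + (q₀ / p.ℓ₂) * Real.sqrt (p.c₁ / (p.ρ * p.k₁)) * Real.exp (-(z^2) * (p.α₁ / p.α₃)))

/-- Critical heat-transfer coefficient `h₂`. -/
def h2 (p : Params) (Ainf z₀ : ℝ) : ℝ :=
  ((p.B - p.C) / (Ainf - p.B)) *
    Real.sqrt (p.k₂ * p.k₃ * p.c₂ / (Real.pi * p.c₃ * p.α₃)) *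
    (1 / erf (z₀ * Real.sqrt (p.α₁ / p.α₂)))

/-- Critical heat-flux coefficient `q₂`. -/
def q2 (p : Params) (z₀ : ℝ) : ℝ :=
  p.k₂ * (p.B - p.C) / (Real.sqrt (p.α₂ * Real.pi) * erf (z₀ * Real.sqrt (p.α₁ / p.α₂)))

end Params

namespace Params
variable (p : Params)

lemma α₁_pos : 0 < p.α₁ := div_pos p.hk₁ (mul_pos p.hρ p.hc₁)
lemma α₂_pos : 0 < p.α₂ := div_pos p.hk₂ (mul_pos p.hρ p.hc₂)
lemma α₃_pos : 0 < p.α₃ := div_pos p.hk₃ (mul_pos p.hρ p.hc₃)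
lemma Ste₁_pos : 0 < p.Ste₁ := div_pos (mul_pos p.hc₁ (sub_pos.2 p.hCD)) p.hℓ₁
lemma Ste₂_pos : 0 < p.Ste₂ := div_pos (mul_pos p.hc₂ (sub_pos.2 p.hBC)) p.hℓ₂

lemma sqrtpi_pos : (0:ℝ) < Real.sqrt Real.pi := Real.sqrt_pos.2 Real.pi_pos

lemma φ_pos {z : ℝ} (hz : 0 < z) : 0 < p.φ z := by
  unfold Params.φ
  have h1 : 0 < p.Ste₁ / Real.sqrt Real.pi := div_pos p.Ste₁_pos sqrtpi_pos
  have h2 : 0 < Real.exp (-(z^2)) := Real.exp_pos _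
  have h3 : 0 < erfc z := erfc_pos hz
  positivity

lemma φ_strictMono {x y : ℝ} (hx : 0 < x) (hxy : x < y) : p.φ x < p.φ y := by
  unfold Params.φ
  have h1 : 0 < p.Ste₁ / Real.sqrt Real.pi := div_pos p.Ste₁_pos sqrtpi_pos
  have h2 := mills_mono hx hxy
  have h3 := mul_lt_mul_of_pos_left h2 h1
  rw [mul_div_assoc, mul_div_assoc]
  linarith

lemma Q_strictMono {x y : ℝ} (hx : 0 < x) (hxy : x < y) : p.Q x < p.Q y := by
  unfold Params.Q
  have hr : 0 < p.α₁ / p.α₂ := div_pos p.α₁_pos p.α₂_pos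
  have hc : 0 < p.ℓ₁ / p.ℓ₂ := div_pos p.hℓ₁ p.hℓ₂
  have hφx := p.φ_pos hx
  have hφ := p.φ_strictMono hx hxy
  have he : Real.exp (x^2 * (p.α₁/p.α₂)) < Real.exp (y^2 * (p.α₁/p.α₂)) :=
    Real.exp_lt_exp.2 (mul_lt_mul_of_pos_right (by nlinarith) hr)
  have hex : 0 < Real.exp (x^2 * (p.α₁/p.α₂)) := Real.exp_pos _
  have h4 : p.φ x * Real.exp (x^2 * (p.α₁/p.α₂)) < p.φ y * Real.exp (y^2 * (p.α₁/p.α₂)) :=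
    mul_lt_mul'' (p.φ_strictMono hx hxy) he hφx.le hex.le
  rw [mul_assoc, mul_assoc]
  exact mul_lt_mul_of_pos_left h4 hc

lemma H_strictMono {x y : ℝ} (hx : 0 < x) (hxy : x < y) : p.H x < p.H y := by
  unfold Params.H
  have hr : 0 < p.α₁ / p.α₂ := div_pos p.α₁_pos p.α₂_pos
  have hsr : 0 < Real.sqrt (p.α₁ / p.α₂) := Real.sqrt_pos.2 hr
  have herf : erf (x * Real.sqrt (p.α₁/p.α₂)) < erf (y * Real.sqrt (p.α₁/p.α₂)) :=
    erf_strictMono (by exact mul_lt_mul_of_pos_right hxy hsr)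
  have hK : 0 < (p.Ste₂ / Real.sqrt Real.pi) * (p.ℓ₂ / p.ℓ₁) *
      Real.sqrt (p.k₂ * p.c₁ / (p.k₁ * p.c₂)) := by
    have h1 : 0 < p.Ste₂ / Real.sqrt Real.pi := div_pos p.Ste₂_pos sqrtpi_pos
    have h2 : 0 < p.ℓ₂ / p.ℓ₁ := div_pos p.hℓ₂ p.hℓ₁
    have h3 : 0 < Real.sqrt (p.k₂ * p.c₁ / (p.k₁ * p.c₂)) :=
      Real.sqrt_pos.2 (div_pos (mul_pos p.hk₂ p.hc₁) (mul_pos p.hk₁ p.hc₂))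
    positivity
  have hφx := p.φ_pos hx
  have hφy := p.φ_pos (hx.trans hxy)
  have hratio : Real.exp (-(y^2) * (p.α₁/p.α₂)) / p.φ y
      < Real.exp (-(x^2) * (p.α₁/p.α₂)) / p.φ x := by
    rw [div_lt_div_iff₀ hφy hφx]
    have he : Real.exp (-(y^2) * (p.α₁/p.α₂)) < Real.exp (-(x^2) * (p.α₁/p.α₂)) := by
      apply Real.exp_lt_exp.2
      have := mul_lt_mul_of_pos_right (show x^2 < y^2 by nlinarith) hr
      linarith
    have hφ := p.φ_strictMono hx hxy
    have hey : 0 < Real.exp (-(y^2) * (p.α₁/p.α₂)) := Real.exp_pos _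
    nlinarith
  have := mul_lt_mul_of_pos_left hratio hK
  linarith

lemma P_eq (q₀ z : ℝ) : p.P q₀ z = -(z * Real.exp (z^2 * (p.α₁/p.α₂))) +
    (q₀ / p.ℓ₂) * Real.sqrt (p.c₁ / (p.ρ * p.k₁)) *
      Real.exp (-(z^2) * (p.α₁/p.α₃ - p.α₁/p.α₂)) := by
  unfold Params.P
  have h : Real.exp (z^2 * (p.α₁/p.α₂)) * Real.exp (-(z^2) * (p.α₁/p.α₃))
      = Real.exp (-(z^2) * (p.α₁/p.α₃ - p.α₁/p.α₂)) := by
    rw [← Real.exp_add]; congr 1; ring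
  linear_combination ((q₀ / p.ℓ₂) * Real.sqrt (p.c₁ / (p.ρ * p.k₁))) * h

lemma P_strictAnti {q₀ x y : ℝ} (hq : 0 < q₀) (hα : p.α₃ < p.α₂)
    (hx : 0 ≤ x) (hxy : x < y) : p.P q₀ y < p.P q₀ x := by
  rw [P_eq, P_eq]
  have hr : 0 < p.α₁ / p.α₂ := div_pos p.α₁_pos p.α₂_pos
  have hba : 0 < p.α₁/p.α₃ - p.α₁/p.α₂ := by
    rw [sub_pos]
    exact div_lt_div_of_pos_left p.α₁_pos p.α₃_pos hα
  have hc : 0 < (q₀ / p.ℓ₂) * Real.sqrt (p.c₁ / (p.ρ * p.k₁)) := by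
    have h1 : 0 < q₀ / p.ℓ₂ := div_pos hq p.hℓ₂
    have h2 : 0 < Real.sqrt (p.c₁ / (p.ρ * p.k₁)) :=
      Real.sqrt_pos.2 (div_pos p.hc₁ (mul_pos p.hρ p.hk₁))
    positivity
  have h1 : x * Real.exp (x^2 * (p.α₁/p.α₂)) < y * Real.exp (y^2 * (p.α₁/p.α₂)) := by
    have he : Real.exp (x^2 * (p.α₁/p.α₂)) ≤ Real.exp (y^2 * (p.α₁/p.α₂)) := by
      apply Real.exp_le_exp.2
      exact mul_le_mul_of_nonneg_right (by nlinarith) hr.le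
    have hex : 0 < Real.exp (x^2 * (p.α₁/p.α₂)) := Real.exp_pos _
    nlinarith
  have h2 : Real.exp (-(y^2) * (p.α₁/p.α₃ - p.α₁/p.α₂))
      < Real.exp (-(x^2) * (p.α₁/p.α₃ - p.α₁/p.α₂)) := by
    apply Real.exp_lt_exp.2
    have := mul_lt_mul_of_pos_right (show x^2 < y^2 by nlinarith) hba
    linarith
  have := mul_lt_mul_of_pos_left h2 hc
  linarith

lemma sqrt_scalar : p.k₃ / Real.sqrt (Real.pi * p.α₃) * Real.sqrt (p.c₁ / (p.ρ * p.k₁))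
    = Real.sqrt (p.c₁ * p.c₃ * p.k₃ / (Real.pi * p.k₁)) := by
  have hπα : 0 < Real.pi * p.α₃ := mul_pos Real.pi_pos p.α₃_pos
  have h1 : 0 ≤ p.k₃ / Real.sqrt (Real.pi * p.α₃) * Real.sqrt (p.c₁ / (p.ρ * p.k₁)) :=
    mul_nonneg (div_nonneg p.hk₃.le (Real.sqrt_nonneg _)) (Real.sqrt_nonneg _)
  have h2 : (p.k₃ / Real.sqrt (Real.pi * p.α₃) * Real.sqrt (p.c₁ / (p.ρ * p.k₁)))^2
      = p.c₁ * p.c₃ * p.k₃ / (Real.pi * p.k₁) := by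
    rw [mul_pow, div_pow, Real.sq_sqrt hπα.le,
      Real.sq_sqrt (div_pos p.hc₁ (mul_pos p.hρ p.hk₁)).le]
    unfold Params.α₃
    field_simp [p.hk₃.ne', p.hρ.ne', p.hk₁.ne', p.hc₃.ne', Real.pi_ne_zero]
  rw [← h2, Real.sqrt_sq h1]

end Params

/-- Equivalence Dirichlet → Neumann. -/
theorem dirichlet_to_neumann (p : Params) (A z₀ μ₁ μ₂ q₀ : ℝ)
    (hα : p.α₃ < p.α₂) (hA : p.B < A)
    (hz₀ : 0 < z₀ ∧ p.H z₀ = 0)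
    (hμ₁ : z₀ < μ₁) (hμ₂ : 0 ≤ μ₂)
    (herf : erf (μ₂ * Real.sqrt (p.α₁ / p.α₂)) = p.H μ₁)
    (hsys : p.Q μ₁ = p.V A μ₂)
    (hcond : p.k₃ * (A - p.B) /
        (Real.sqrt p.α₃ * erf (μ₂ * Real.sqrt (p.α₁ / p.α₃))) >
      p.k₂ * (p.B - p.C) /
        (Real.sqrt p.α₂ * erf (z₀ * Real.sqrt (p.α₁ / p.α₂))))
    (hq₀ : q₀ = (p.k₃ / Real.sqrt (Real.pi * p.α₃)) *
      ((A - p.B) / erf (μ₂ * Real.sqrt (p.α₁ / p.α₃)))) :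
    p.q2 z₀ < q₀ ∧ p.Q μ₁ = p.P q₀ μ₂ ∧
    ∀ lam₁ lam₂ : ℝ, z₀ < lam₁ → 0 ≤ lam₂ →
      erf (lam₂ * Real.sqrt (p.α₁ / p.α₂)) = p.H lam₁ →
      p.Q lam₁ = p.P q₀ lam₂ → lam₁ = μ₁ ∧ lam₂ = μ₂ := by
  obtain ⟨hz₀pos, -⟩ := hz₀
  have hμ₁pos : 0 < μ₁ := hz₀pos.trans hμ₁
  have hr₂ : 0 < p.α₁ / p.α₂ := div_pos p.α₁_pos p.α₂_pos
  have hr₃ : 0 < p.α₁ / p.α₃ := div_pos p.α₁_pos p.α₃_pos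
  have hsr₂ : 0 < Real.sqrt (p.α₁ / p.α₂) := Real.sqrt_pos.2 hr₂
  have hsr₃ : 0 < Real.sqrt (p.α₁ / p.α₃) := Real.sqrt_pos.2 hr₃
  have hE₂ : 0 < erf (z₀ * Real.sqrt (p.α₁ / p.α₂)) := erf_pos (mul_pos hz₀pos hsr₂)
  have hsα₂ : 0 < Real.sqrt p.α₂ := Real.sqrt_pos.2 p.α₂_pos
  have hsα₃ : 0 < Real.sqrt p.α₃ := Real.sqrt_pos.2 p.α₃_pos
  have hπ : 0 < Real.sqrt Real.pi := Params.sqrtpi_pos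
  have hR : 0 < p.k₂ * (p.B - p.C) / (Real.sqrt p.α₂ * erf (z₀ * Real.sqrt (p.α₁ / p.α₂))) :=
    div_pos (mul_pos p.hk₂ (sub_pos.2 p.hBC)) (mul_pos hsα₂ hE₂)
  have hE₃ : 0 < erf (μ₂ * Real.sqrt (p.α₁ / p.α₃)) := by
    by_contra hc
    push_neg at hc
    have hden : Real.sqrt p.α₃ * erf (μ₂ * Real.sqrt (p.α₁ / p.α₃)) ≤ 0 :=
      mul_nonpos_of_nonneg_of_nonpos hsα₃.le hc
    have hnum : 0 ≤ p.k₃ * (A - p.B) := (mul_pos p.hk₃ (sub_pos.2 hA)).le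
    have h0 : p.k₃ * (A - p.B) /
        (Real.sqrt p.α₃ * erf (μ₂ * Real.sqrt (p.α₁ / p.α₃))) ≤ 0 :=
      div_nonpos_of_nonneg_of_nonpos hnum hden
    linarith [hR.trans hcond]
  have hq₀pos : 0 < q₀ := by
    rw [hq₀]
    exact mul_pos (div_pos p.hk₃ (Real.sqrt_pos.2 (mul_pos Real.pi_pos p.α₃_pos)))
      (div_pos (sub_pos.2 hA) hE₃)
  have hq2q0 : p.q2 z₀ < q₀ := by
    have e1 : p.q2 z₀ * Real.sqrt Real.pi
        = p.k₂ * (p.B - p.C) / (Real.sqrt p.α₂ * erf (z₀ * Real.sqrt (p.α₁/p.α₂))) := by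
      unfold Params.q2
      rw [Real.sqrt_mul p.α₂_pos.le]
      field_simp
    have e2 : q₀ * Real.sqrt Real.pi
        = p.k₃ * (A - p.B) / (Real.sqrt p.α₃ * erf (μ₂ * Real.sqrt (p.α₁/p.α₃))) := by
      rw [hq₀, Real.sqrt_mul Real.pi_pos.le]
      field_simp
    have hlt : p.q2 z₀ * Real.sqrt Real.pi < q₀ * Real.sqrt Real.pi := by
      rw [e1, e2]; exact hcond
    exact (mul_lt_mul_iff_of_pos_right hπ).mp hlt
  have hVP : p.V A μ₂ = p.P q₀ μ₂ := by
    rw [p.P_eq, hq₀]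
    unfold Params.V
    rw [← p.sqrt_scalar]
    have h1 : Real.sqrt (Real.pi * p.α₃) ≠ 0 :=
      (Real.sqrt_pos.2 (mul_pos Real.pi_pos p.α₃_pos)).ne'
    field_simp
    ring
  have hQP : p.Q μ₁ = p.P q₀ μ₂ := hsys.trans hVP
  refine ⟨hq2q0, hQP, ?_⟩
  intro l₁ l₂ hl₁ hl₂ h3 h4
  have key : ∀ a₁ a₂ b₁ b₂ : ℝ, z₀ < a₁ → 0 ≤ a₂ →
      erf (a₂ * Real.sqrt (p.α₁/p.α₂)) = p.H a₁ → p.Q a₁ = p.P q₀ a₂ →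
      z₀ < b₁ → 0 ≤ b₂ →
      erf (b₂ * Real.sqrt (p.α₁/p.α₂)) = p.H b₁ → p.Q b₁ = p.P q₀ b₂ →
      a₁ < b₁ → False := by
    intro a₁ a₂ b₁ b₂ ha₁ ha₂ hae haq hb₁ hb₂ hbe hbq hab
    have hH := p.H_strictMono (hz₀pos.trans ha₁) hab
    have herf2 : erf (a₂ * Real.sqrt (p.α₁/p.α₂)) < erf (b₂ * Real.sqrt (p.α₁/p.α₂)) := by
      rw [hae, hbe]; exact hH
    have hmul := erf_strictMono.lt_iff_lt.mp herf2
    have ha₂b₂ : a₂ < b₂ := (mul_lt_mul_iff_of_pos_right hsr₂).mp hmul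
    have hP := p.P_strictAnti hq₀pos hα ha₂ ha₂b₂
    have hQ := p.Q_strictMono (hz₀pos.trans ha₁) hab
    rw [haq, hbq] at hQ
    linarith
  rcases lt_trichotomy l₁ μ₁ with h | h | h
  · exact (key l₁ l₂ μ₁ μ₂ hl₁ hl₂ h3 h4 hμ₁ hμ₂ herf hQP h).elim
  · refine ⟨h, ?_⟩
    have he : erf (l₂ * Real.sqrt (p.α₁/p.α₂)) = erf (μ₂ * Real.sqrt (p.α₁/p.α₂)) := by
      rw [h3, herf, h]
    have := erf_strictMono.injective he
    exact mul_right_cancel₀ hsr₂.ne' this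
  · exact (key μ₁ μ₂ l₁ l₂ hμ₁ hμ₂ herf hQP hl₁ hl₂ h3 h4 h).elim
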